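/- Key pointwise bound in the rapid-decay embedding: under the group assumptions with doubling constant A and base (U_k), define for n ∈ ℕ the step function P(x) := A^{−nk} for x ∈ U_{θ^k(0)} ∖ U_{θ^{k−1}(0)} (k ≥ 1) and P(x) := 1 for x ∈ U_0. Then P(x)^{1/n} ≤ A · M(𝟙_{U_0})(x) for all x ∈ 𝔤, where M is the maximal operator over all translates x + U_k. -/

import Mathlib

open MeasureTheory ENNReal Pointwise

noncomputable def eNorm {Ω : Type*} [MeasurableSpace Ω] (f : Ω → ℝ≥0∞) (s : ℝ≥0∞)
    (μ : Measure Ω) : ℝ≥0∞ :=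
  if s = ∞ then essSup f μ else (∫⁻ x, f x ^ s.toReal ∂μ) ^ s.toReal⁻¹

noncomputable def wChar {Ω : Type*} [MeasurableSpace Ω] (μ : Measure Ω) (𝒰 : Set (Set Ω))
    (w v : Ω → ℝ≥0∞) (s r : ℝ≥0∞) : ℝ≥0∞ :=
  ⨆ U ∈ 𝒰, (μ U) ^ (-(s⁻¹ + r⁻¹).toReal) * eNorm w s (μ.restrict U)
    * eNorm (fun x => (v x)⁻¹) r (μ.restrict U)

noncomputable def maxOp {Ω : Type*} [MeasurableSpace Ω] (μ : Measure Ω) (𝒰 : Set (Set Ω))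
    (f : Ω → ℝ≥0∞) (x : Ω) : ℝ≥0∞ :=
  ⨆ U ∈ 𝒰, ((μ U)⁻¹ * ∫⁻ y in U, f y ∂μ) * Set.indicator U (fun _ => (1 : ℝ≥0∞)) x

def IsBasis {Ω : Type*} [MeasurableSpace Ω] (μ : Measure Ω) (𝒰 : Set (Set Ω)) : Prop :=
  𝒰.Countable ∧ (∀ U ∈ 𝒰, MeasurableSet U ∧ 0 < μ U ∧ μ U < ∞) ∧
    (⋃ U ∈ 𝒰, U) = Set.univ ∧ ∀ x y : Ω, ∃ U ∈ 𝒰, x ∈ U ∧ y ∈ U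

def IsWeight {Ω : Type*} [MeasurableSpace Ω] (w : Ω → ℝ≥0∞) : Prop :=
  Measurable w ∧ ∀ x, 0 < w x ∧ w x < ∞

/-- key pointwise bound in the rapid-decay embedding:
with `P(x) := A^{-nk}` on the annulus `U_{θ^k(0)} ∖ U_{θ^{k-1}(0)}` (k ≥ 1) and
`P(x) := 1` on `U₀`, one has `P(x)^{1/n} ≤ A · M(𝟙_{U₀})(x)` for all `x ∈ 𝔤`,
where `M` is the maximal operator over the basis of all translates `x + U_k`. -/
theorem rapid_decay_pointwise_bound {G : Type*} [AddCommGroup G] [TopologicalSpace G]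
    [IsTopologicalAddGroup G] [MeasurableSpace G] [BorelSpace G]
    (μ : Measure G) [μ.IsAddHaarMeasure]
    (U : ℤ → Set G) (A : ℝ≥0∞) (θ : ℤ → ℤ)
    (hUmeas : ∀ k, MeasurableSet (U k)) (hUsymm : ∀ k, U k = -U k)
    (hUnbhd : ∀ k, U k ∈ nhds (0 : G)) (hUcpt : ∀ k, IsCompact (closure (U k)))
    (hUmono : ∀ k m : ℤ, k ≤ m → U k ⊆ U m) (hUcover : (⋃ k, U k) = Set.univ)
    (hθmono : Monotone θ) (hθ : ∀ k, k < θ k)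
    (hθdouble : ∀ k, U k + U k ⊆ U (θ k))
    (hA : 1 ≤ A) (hA' : A ≠ ∞)
    (hdouble : ∀ (k : ℤ) (x : G), μ (x +ᵥ U (θ k)) ≤ A * μ (x +ᵥ U k))
    (n : ℕ) (hn : 1 ≤ n) :
    (∀ x ∈ U 0, (1 : ℝ≥0∞)
      ≤ A * maxOp μ {V : Set G | ∃ (y : G) (k : ℤ), V = y +ᵥ U k}
          (Set.indicator (U 0) fun _ => (1 : ℝ≥0∞)) x) ∧
    (∀ k : ℕ, 1 ≤ k → ∀ x ∈ U (θ^[k] 0) \ U (θ^[k - 1] 0),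
      (A ^ (-((n : ℝ) * k))) ^ (n : ℝ)⁻¹
        ≤ A * maxOp μ {V : Set G | ∃ (y : G) (k : ℤ), V = y +ᵥ U k}
            (Set.indicator (U 0) fun _ => (1 : ℝ≥0∞)) x) := by
  set 𝒰 : Set (Set G) := {V : Set G | ∃ (y : G) (k : ℤ), V = y +ᵥ U k} with h𝒰
  have hA0 : A ≠ 0 := fun h => by simp [h] at hA
  have hU0pos : (0:ℝ≥0∞) < μ (U 0) := μ.measure_pos_of_mem_nhds (hUnbhd 0)
  have hU0fin : μ (U 0) < ∞ :=
    lt_of_le_of_lt (measure_mono subset_closure) (hUcpt 0).measure_lt_top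
  -- iterates are nonnegative
  have hiter_nonneg : ∀ k : ℕ, (0:ℤ) ≤ θ^[k] 0 := by
    intro k; induction k with
    | zero => simp
    | succ k ih =>
      rw [Function.iterate_succ_apply']
      exact le_of_lt (lt_of_le_of_lt ih (hθ _))
  -- value of the integral over any superset of U 0
  have hint : ∀ V : Set G, U 0 ⊆ V →
      (∫⁻ y in V, Set.indicator (U 0) (fun _ => (1:ℝ≥0∞)) y ∂μ) = μ (U 0) := by
    intro V hV
    rw [lintegral_indicator (hUmeas 0), Measure.restrict_restrict (hUmeas 0)]
    simp [Set.inter_eq_self_of_subset_left hV]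
  -- lower bound of the maximal operator
  have hmax : ∀ (V : Set G), V ∈ 𝒰 → U 0 ⊆ V → ∀ x ∈ V,
      (μ V)⁻¹ * μ (U 0) ≤ maxOp μ 𝒰 (Set.indicator (U 0) fun _ => (1 : ℝ≥0∞)) x := by
    intro V hV hsub x hx
    have : ((μ V)⁻¹ * ∫⁻ y in V, Set.indicator (U 0) (fun _ => (1:ℝ≥0∞)) y ∂μ)
        * Set.indicator V (fun _ => (1 : ℝ≥0∞)) x = (μ V)⁻¹ * μ (U 0) := by
      rw [hint V hsub, Set.indicator_of_mem hx, mul_one]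
    calc (μ V)⁻¹ * μ (U 0) = _ := this.symm
      _ ≤ maxOp μ 𝒰 (Set.indicator (U 0) fun _ => (1 : ℝ≥0∞)) x := le_iSup₂ (f := fun V (_ : V ∈ 𝒰) =>
          ((μ V)⁻¹ * ∫⁻ y in V, Set.indicator (U 0) (fun _ => (1:ℝ≥0∞)) y ∂μ)
            * Set.indicator V (fun _ => (1 : ℝ≥0∞)) x) V hV
  constructor
  · intro x hx
    have hV : U 0 ∈ 𝒰 := ⟨0, 0, by simp⟩
    have h1 := hmax (U 0) hV subset_rfl x hx
    rw [ENNReal.inv_mul_cancel hU0pos.ne' hU0fin.ne] at h1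
    calc (1:ℝ≥0∞) = 1 * 1 := by ring
      _ ≤ A * maxOp μ 𝒰 (Set.indicator (U 0) fun _ => (1 : ℝ≥0∞)) x := mul_le_mul' hA h1
  · intro k hk x hx
    -- the set V = x + U (θ^[k+1] 0)
    set m : ℤ := θ^[k] 0 with hm
    set V : Set G := x +ᵥ U (θ^[k+1] 0) with hVdef
    have hV𝒰 : V ∈ 𝒰 := ⟨x, θ^[k+1] 0, rfl⟩
    have hxm : x ∈ U m := hx.1
    have hxV : x ∈ V := by
      rw [hVdef, Set.mem_vadd_set_iff_neg_vadd_mem]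
      simpa using mem_of_mem_nhds (hUnbhd (θ^[k+1] 0))
    have hsub : U 0 ⊆ V := by
      intro y hy
      rw [hVdef, Set.mem_vadd_set_iff_neg_vadd_mem]
      have hnegx : -x ∈ U m := by
        rw [hUsymm m] at hxm
        simpa using hxm
      have hy' : y ∈ U m := hUmono 0 m (hiter_nonneg k) hy
      have : -x + y ∈ U m + U m := Set.add_mem_add hnegx hy'
      have h2 : -x + y ∈ U (θ m) := hθdouble m this
      rw [Function.iterate_succ_apply']
      simpa [vadd_eq_add] using h2
    -- doubling iterate
    have hdk : ∀ j : ℕ, μ (x +ᵥ U (θ^[j] 0)) ≤ A ^ j * μ (x +ᵥ U 0) := by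
      intro j; induction j with
      | zero => simp
      | succ j ih =>
        rw [Function.iterate_succ_apply']
        calc μ (x +ᵥ U (θ (θ^[j] 0))) ≤ A * μ (x +ᵥ U (θ^[j] 0)) := hdouble _ x
          _ ≤ A * (A ^ j * μ (x +ᵥ U 0)) := mul_le_mul_right ih A
          _ = A ^ (j+1) * μ (x +ᵥ U 0) := by rw [pow_succ]; ring
    have hμV : μ V ≤ A ^ (k+1) * μ (U 0) := by
      rw [hVdef, measure_vadd]
      have := hdk (k+1)
      rwa [measure_vadd, measure_vadd] at this
    have hAk0 : (A : ℝ≥0∞) ^ (k+1) ≠ 0 := pow_ne_zero _ hA0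
    have hAk' : (A : ℝ≥0∞) ^ (k+1) ≠ ∞ := ENNReal.pow_ne_top hA'
    have hlow : (A ^ (k+1) : ℝ≥0∞)⁻¹ ≤ (μ V)⁻¹ * μ (U 0) := by
      have h1 : (μ V)⁻¹ ≥ (A ^ (k+1) * μ (U 0))⁻¹ := ENNReal.inv_le_inv.2 hμV
      calc (A ^ (k+1) : ℝ≥0∞)⁻¹
          = (A ^ (k+1) * μ (U 0))⁻¹ * μ (U 0) := by
            rw [ENNReal.mul_inv (Or.inl hAk0) (Or.inl hAk'), mul_assoc,
              ENNReal.inv_mul_cancel hU0pos.ne' hU0fin.ne, mul_one]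
        _ ≤ (μ V)⁻¹ * μ (U 0) := mul_le_mul_left h1 _
    have hmain : (A ^ (k+1) : ℝ≥0∞)⁻¹
        ≤ maxOp μ 𝒰 (Set.indicator (U 0) fun _ => (1 : ℝ≥0∞)) x :=
      le_trans hlow (hmax V hV𝒰 hsub x hxV)
    -- LHS simplification
    have hlhs : (A ^ (-((n : ℝ) * k))) ^ (n : ℝ)⁻¹ = (A ^ k : ℝ≥0∞)⁻¹ := by
      rw [← ENNReal.rpow_natCast A k, ← ENNReal.rpow_neg, ← ENNReal.rpow_mul]
      congr 1
      have hn0 : (n : ℝ) ≠ 0 := Nat.cast_ne_zero.2 (by omega)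
      field_simp
    rw [hlhs]
    calc (A ^ k : ℝ≥0∞)⁻¹ = A * (A ^ (k+1) : ℝ≥0∞)⁻¹ := by
          rw [pow_succ', ENNReal.mul_inv (Or.inl hA0) (Or.inl hA'), ← mul_assoc,
            ENNReal.mul_inv_cancel hA0 hA', one_mul]
      _ ≤ A * maxOp μ 𝒰 (Set.indicator (U 0) fun _ => (1 : ℝ≥0∞)) x :=
          mul_le_mul_right hmain A
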